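/- Let m ≥ 3 be odd, f a quadratic polynomial over Z/mZ in n variables, and f' = f + a x_i x_j with a ∈ Z/mZ (an added edge). Then for every subset S ⊆ {1,...,n}, |ĉ_S(f')| ≤ √2 · max_T |ĉ_T(f)|, where ĉ_S denotes the Fourier coefficient 2^{-n} Σ_{x∈{-1,1}^n} (Π_{i∈S} x_i) ω^{f(x)}. -/

import Mathlib

/-- The Fourier coefficient `ĉ_S(f) = 2^{-n} Σ_{x ∈ {-1,1}^n} (Π_{i∈S} x_i) ω^{f(x)}` of
`ω^f` on the hypercube, where `f(x) = Σ_{p<q} A_{pq} x_p x_q + Σ_p b_p x_p`. -/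
noncomputable def fourierCoeffQuad' (m n : ℕ) (A : Fin n → Fin n → ZMod m)
    (b : Fin n → ZMod m) (S : Finset (Fin n)) : ℂ :=
  (1 / 2 ^ n) * ∑ x : Fin n → Bool,
    (∏ i ∈ S, (if x i then (1 : ℂ) else -1)) *
      Complex.exp (2 * (Real.pi : ℂ) * Complex.I *
        (((∑ p ∈ Finset.univ.filter (fun p : Fin n × Fin n => p.1 < p.2),
              ((A p.1 p.2).val : ℤ) * (if x p.1 then (1 : ℤ) else -1) *
                (if x p.2 then (1 : ℤ) else -1)) +
            ∑ p, ((b p).val : ℤ) * (if x p then (1 : ℤ) else -1) : ℤ) : ℂ) / (m : ℂ))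

noncomputable def EE (m : ℕ) (t : ℤ) : ℂ := Complex.exp (2 * (Real.pi : ℂ) * Complex.I * (t : ℂ) / m)

lemma EE_add (m : ℕ) (s t : ℤ) : EE m (s + t) = EE m s * EE m t := by
  rw [EE, EE, EE, ← Complex.exp_add]; congr 1; push_cast; ring

lemma EE_congr (m : ℕ) [NeZero m] {s t : ℤ} (h : s % (m:ℤ) = t % (m:ℤ)) : EE m s = EE m t := by
  obtain ⟨k, hk⟩ := Int.ModEq.dvd (Int.ModEq.symm h)
  have hs : s = t + m * k := by linarith
  rw [hs, EE_add]
  have hm : (m:ℂ) ≠ 0 := Nat.cast_ne_zero.mpr (NeZero.ne m)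
  have h1 : EE m ((m:ℤ) * k) = 1 := by
    rw [EE]
    have h2 : 2 * (Real.pi : ℂ) * Complex.I * ((((m:ℤ) * k : ℤ)) : ℂ) / m
        = (k:ℂ) * (2 * (Real.pi:ℂ) * Complex.I) := by push_cast; field_simp
    rw [h2, Complex.exp_int_mul_two_pi_mul_I]
  rw [h1, mul_one]

lemma prod_symmDiff_sq_one {α β : Type*} [DecidableEq α] [CommMonoid β] (g : α → β)
    (hg : ∀ k, g k * g k = 1) (S T : Finset α) :
    ∏ k ∈ symmDiff S T, g k = (∏ k ∈ S, g k) * ∏ k ∈ T, g k := by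
  have h1 : (∏ k ∈ symmDiff S T, g k) * ∏ k ∈ S ∩ T, g k = ∏ k ∈ S ∪ T, g k := by
    have h0 : symmDiff S T ∪ S ∩ T = S ∪ T := by
      simpa [Finset.sup_eq_union, Finset.inf_eq_inter] using symmDiff_sup_inf S T
    have hdisj : Disjoint (symmDiff S T) (S ∩ T) := by
      simpa [Finset.inf_eq_inter] using disjoint_symmDiff_inf S T
    rw [← Finset.prod_union hdisj, h0]
  have h2 : (∏ k ∈ S ∪ T, g k) * ∏ k ∈ S ∩ T, g k = (∏ k ∈ S, g k) * ∏ k ∈ T, g k :=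
    Finset.prod_union_inter
  have h3 : (∏ k ∈ S ∩ T, g k) * ∏ k ∈ S ∩ T, g k = 1 := by
    rw [← Finset.prod_mul_distrib]; exact Finset.prod_eq_one fun k _ => hg k
  calc ∏ k ∈ symmDiff S T, g k = (∏ k ∈ symmDiff S T, g k) * ((∏ k ∈ S ∩ T, g k) * ∏ k ∈ S ∩ T, g k) := by
        rw [h3, mul_one]
    _ = ((∏ k ∈ symmDiff S T, g k) * ∏ k ∈ S ∩ T, g k) * ∏ k ∈ S ∩ T, g k := by rw [mul_assoc]
    _ = _ := by rw [h1, h2]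

lemma abs_cos_add_abs_sin_le (θ : ℝ) : |Real.cos θ| + |Real.sin θ| ≤ Real.sqrt 2 := by
  have h1 := Real.sin_sq_add_cos_sq θ
  have h3 : (|Real.cos θ| + |Real.sin θ|)^2 ≤ 2 := by
    nlinarith [sq_abs (Real.cos θ), sq_abs (Real.sin θ), sq_nonneg (|Real.cos θ| - |Real.sin θ|),
      abs_nonneg (Real.cos θ), abs_nonneg (Real.sin θ)]
  nlinarith [Real.sq_sqrt (by norm_num : (2:ℝ) ≥ 0), Real.sqrt_nonneg 2,
    abs_nonneg (Real.cos θ), abs_nonneg (Real.sin θ)]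

section main
variable (m n : ℕ) [NeZero m]

/-- The integer exponent. -/
def QQ (A : Fin n → Fin n → ZMod m) (b : Fin n → ZMod m) (x : Fin n → Bool) : ℤ :=
  (∑ p ∈ Finset.univ.filter (fun p : Fin n × Fin n => p.1 < p.2),
      ((A p.1 p.2).val : ℤ) * (if x p.1 then (1 : ℤ) else -1) *
        (if x p.2 then (1 : ℤ) else -1)) +
    ∑ p, ((b p).val : ℤ) * (if x p then (1 : ℤ) else -1)

lemma fourier_eq (A : Fin n → Fin n → ZMod m) (b : Fin n → ZMod m) (S : Finset (Fin n)) :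
    fourierCoeffQuad' m n A b S = (1 / 2 ^ n) * ∑ x : Fin n → Bool,
      (∏ k ∈ S, (if x k then (1 : ℂ) else -1)) * EE m (QQ m n A b x) := rfl

end main

section main2
variable (m n : ℕ) [NeZero m]

lemma QQ_split (A : Fin n → Fin n → ZMod m) (b : Fin n → ZMod m)
    (i j : Fin n) (hij : i < j) (x : Fin n → Bool) :
    QQ m n A b x =
      ((∑ p ∈ (Finset.univ.filter (fun p : Fin n × Fin n => p.1 < p.2)).erase (i, j),
          ((A p.1 p.2).val : ℤ) * (if x p.1 then (1 : ℤ) else -1) *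
            (if x p.2 then (1 : ℤ) else -1)) +
        ∑ p, ((b p).val : ℤ) * (if x p then (1 : ℤ) else -1)) +
      ((A i j).val : ℤ) * ((if x i then (1 : ℤ) else -1) * (if x j then (1 : ℤ) else -1)) := by
  have hmem : (i, j) ∈ Finset.univ.filter (fun p : Fin n × Fin n => p.1 < p.2) := by
    simp [hij]
  rw [QQ, ← Finset.sum_erase_add _ _ hmem]
  ring

lemma QQ_mod (A A' : Fin n → Fin n → ZMod m) (b : Fin n → ZMod m)
    (i j : Fin n) (hij : i < j) (a : ZMod m)
    (hA' : ∀ p q, A' p q = if (p, q) = (i, j) then A p q + a else A p q)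
    (x : Fin n → Bool) :
    QQ m n A' b x % (m : ℤ) =
      (QQ m n A b x +
        ((a.val : ℤ)) * ((if x i then (1 : ℤ) else -1) * (if x j then (1 : ℤ) else -1))) % (m : ℤ) := by
  have hsame : ∀ p ∈ (Finset.univ.filter (fun p : Fin n × Fin n => p.1 < p.2)).erase (i, j),
      ((A' p.1 p.2).val : ℤ) * (if x p.1 then (1 : ℤ) else -1) * (if x p.2 then (1 : ℤ) else -1)
      = ((A p.1 p.2).val : ℤ) * (if x p.1 then (1 : ℤ) else -1) * (if x p.2 then (1 : ℤ) else -1) := by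
    intro p hp
    have hne : p ≠ (i, j) := Finset.ne_of_mem_erase hp
    have : A' p.1 p.2 = A p.1 p.2 := by
      rw [hA']
      simp only [ite_eq_right_iff]
      intro h
      exact absurd (by rw [← h]) hne
    rw [this]
  have hij' : A' i j = A i j + a := by rw [hA']; simp
  rw [QQ_split m n A' b i j hij x, QQ_split m n A b i j hij x,
    Finset.sum_congr rfl hsame, hij']
  have hval : (((A i j + a).val : ℤ)) % (m : ℤ) = ((A i j).val + a.val : ℤ) % (m : ℤ) := by
    rw [ZMod.val_add]
    push_cast
    exact Int.emod_emod_of_dvd _ dvd_rfl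
  have : Int.ModEq (m : ℤ) (((A i j + a).val : ℤ)) (((A i j).val : ℤ) + (a.val : ℤ)) := by
    simpa [Int.ModEq] using hval
  have h2 := (this.mul_right ((if x i then (1 : ℤ) else -1) * (if x j then (1 : ℤ) else -1))).add_left
    ((∑ p ∈ (Finset.univ.filter (fun p : Fin n × Fin n => p.1 < p.2)).erase (i, j),
          ((A p.1 p.2).val : ℤ) * (if x p.1 then (1 : ℤ) else -1) *
            (if x p.2 then (1 : ℤ) else -1)) +
        ∑ p, ((b p).val : ℤ) * (if x p then (1 : ℤ) else -1))
  calc _ = _ := h2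
    _ = _ := by congr 1; ring

end main2

section main3
variable (m n : ℕ) [NeZero m]

lemma key_decomp (A A' : Fin n → Fin n → ZMod m) (b : Fin n → ZMod m)
    (i j : Fin n) (hij : i < j) (a : ZMod m)
    (hA' : ∀ p q, A' p q = if (p, q) = (i, j) then A p q + a else A p q)
    (S : Finset (Fin n)) :
    fourierCoeffQuad' m n A' b S =
      ((EE m (a.val : ℤ) + EE m (-(a.val : ℤ))) / 2) * fourierCoeffQuad' m n A b S +
      ((EE m (a.val : ℤ) - EE m (-(a.val : ℤ))) / 2) *
        fourierCoeffQuad' m n A b (symmDiff S {i, j}) := by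
  set c : ℤ := (a.val : ℤ) with hc
  set μ : ℂ := (EE m c + EE m (-c)) / 2 with hmu
  set lam : ℂ := (EE m c - EE m (-c)) / 2 with hlam
  rw [fourier_eq, fourier_eq, fourier_eq]
  have hx : ∀ x : Fin n → Bool,
      (∏ k ∈ S, (if x k then (1 : ℂ) else -1)) * EE m (QQ m n A' b x) =
      μ * ((∏ k ∈ S, (if x k then (1 : ℂ) else -1)) * EE m (QQ m n A b x)) +
      lam * ((∏ k ∈ symmDiff S {i, j}, (if x k then (1 : ℂ) else -1)) * EE m (QQ m n A b x)) := by
    intro x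
    set σZ : ℤ := (if x i then (1 : ℤ) else -1) * (if x j then (1 : ℤ) else -1) with hsz
    set σC : ℂ := (if x i then (1 : ℂ) else -1) * (if x j then (1 : ℂ) else -1) with hsc
    have h1 : EE m (QQ m n A' b x) = EE m (QQ m n A b x) * EE m (c * σZ) := by
      rw [← EE_add]
      exact EE_congr m (QQ_mod m n A A' b i j hij a hA' x)
    have h2 : EE m (c * σZ) = μ + σC * lam := by
      rcases hxi : x i <;> rcases hxj : x j <;>
        simp only [hsz, hsc, hxi, hxj, Bool.false_eq_true, if_true, if_false, mul_one,
          mul_neg_one, one_mul, neg_mul, neg_neg, mul_neg] <;>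
        rw [hmu, hlam] <;> ring
    have h3 : (∏ k ∈ symmDiff S {i, j}, (if x k then (1 : ℂ) else -1)) =
        (∏ k ∈ S, (if x k then (1 : ℂ) else -1)) * σC := by
      rw [prod_symmDiff_sq_one _ (fun k => by rcases hk : x k <;> simp [hk]) S {i, j},
        Finset.prod_pair (ne_of_lt hij)]
    rw [h1, h2, h3]
    ring
  rw [Finset.sum_congr rfl (fun x _ => hx x), Finset.sum_add_distrib,
    ← Finset.mul_sum, ← Finset.mul_sum]
  ring

end main3

theorem stmt_18 (m n : ℕ) [NeZero m] (hm : 3 ≤ m) (hodd : Odd m)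
    (A A' : Fin n → Fin n → ZMod m) (b : Fin n → ZMod m)
    (i j : Fin n) (hij : i < j) (a : ZMod m)
    (hA' : ∀ p q, A' p q = if (p, q) = (i, j) then A p q + a else A p q)
    (S : Finset (Fin n)) :
    ‖fourierCoeffQuad' m n A' b S‖ ≤
      Real.sqrt 2 *
        Finset.univ.sup' Finset.univ_nonempty
          (fun T : Finset (Fin n) => ‖fourierCoeffQuad' m n A b T‖) := by
  set M := Finset.univ.sup' Finset.univ_nonempty
      (fun T : Finset (Fin n) => ‖fourierCoeffQuad' m n A b T‖) with hM
  set c : ℤ := (a.val : ℤ) with hc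
  set μ : ℂ := (EE m c + EE m (-c)) / 2 with hmu
  set lam : ℂ := (EE m c - EE m (-c)) / 2 with hlam
  have hb1 : ‖fourierCoeffQuad' m n A b S‖ ≤ M :=
    Finset.le_sup' (fun T : Finset (Fin n) => ‖fourierCoeffQuad' m n A b T‖)
      (Finset.mem_univ S)
  have hb2 : ‖fourierCoeffQuad' m n A b (symmDiff S {i, j})‖ ≤ M :=
    Finset.le_sup' (fun T : Finset (Fin n) => ‖fourierCoeffQuad' m n A b T‖)
      (Finset.mem_univ (symmDiff S {i, j}))
  have hM0 : 0 ≤ M := le_trans (norm_nonneg _) hb1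
  -- identify μ and lam with cos/sin
  set θ : ℝ := 2 * Real.pi * c / m with hθ
  have hmC : (m : ℂ) ≠ 0 := Nat.cast_ne_zero.mpr (NeZero.ne m)
  have hmR : (m : ℝ) ≠ 0 := Nat.cast_ne_zero.mpr (NeZero.ne m)
  have hEc : EE m c = Complex.exp ((θ : ℂ) * Complex.I) := by
    rw [EE]; congr 1; rw [hθ]; push_cast; ring
  have hEnc : EE m (-c) = Complex.exp (-(θ : ℂ) * Complex.I) := by
    rw [EE]; congr 1; rw [hθ]; push_cast; ring
  have hmu' : μ = Complex.cos (θ : ℂ) := by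
    rw [hmu, hEc, hEnc, Complex.exp_mul_I, Complex.exp_mul_I, Complex.cos_neg, Complex.sin_neg]
    ring
  have hlam' : lam = Complex.sin (θ : ℂ) * Complex.I := by
    rw [hlam, hEc, hEnc, Complex.exp_mul_I, Complex.exp_mul_I, Complex.cos_neg, Complex.sin_neg]
    ring
  have habsmu : ‖μ‖ = |Real.cos θ| := by
    rw [hmu', ← Complex.ofReal_cos, Complex.norm_real, Real.norm_eq_abs]
  have habslam : ‖lam‖ = |Real.sin θ| := by
    rw [hlam', norm_mul, Complex.norm_I, ← Complex.ofReal_sin, Complex.norm_real, Real.norm_eq_abs, mul_one]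
  rw [key_decomp m n A A' b i j hij a hA' S]
  calc ‖μ * fourierCoeffQuad' m n A b S
        + lam * fourierCoeffQuad' m n A b (symmDiff S {i, j})‖
      ≤ ‖μ * fourierCoeffQuad' m n A b S‖
        + ‖lam * fourierCoeffQuad' m n A b (symmDiff S {i, j})‖ :=
        norm_add_le _ _
    _ = ‖μ‖ * ‖fourierCoeffQuad' m n A b S‖
        + ‖lam‖ * ‖fourierCoeffQuad' m n A b (symmDiff S {i, j})‖ := by
        rw [norm_mul, norm_mul]
    _ ≤ ‖μ‖ * M + ‖lam‖ * M := by
        gcongr <;> positivity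
    _ = (|Real.cos θ| + |Real.sin θ|) * M := by rw [habsmu, habslam]; ring
    _ ≤ Real.sqrt 2 * M := by
        have := abs_cos_add_abs_sin_le θ
        nlinarith
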